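/- For every c ∈ ℂ^{ℤ_d×ℤ_d}, (√d·L)⁴ c = (F* R^{−2} F)·c, where the right-hand side is the matrix product of the d×d matrix F*R^{−2}F with the d×d matrix c. -/

import Mathlib

open Matrix Complex

/-- `ω = exp(2πi/d)`, a primitive `d`-th root of unity. -/
noncomputable def omegaRoot (d : ℕ) : ℂ := Complex.exp (2 * Real.pi * Complex.I / d)

/-- `μ = exp(2πi/(2d))`. -/
noncomputable def muRoot (d : ℕ) : ℂ := Complex.exp (2 * Real.pi * Complex.I / (2 * d))

/-- The cyclic shift matrix `S`, `S_{jk} = δ_{j,k+1}`. -/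
def Smat (d : ℕ) [NeZero d] : Matrix (ZMod d) (ZMod d) ℂ :=
  Matrix.of fun j k => if j = k + 1 then 1 else 0

/-- The modulation matrix `Ω`, `Ω_{jk} = ω^j δ_{jk}`. -/
noncomputable def Omat (d : ℕ) [NeZero d] : Matrix (ZMod d) (ZMod d) ℂ :=
  Matrix.of fun j k => if j = k then omegaRoot d ^ j.val else 0

/-- The Fourier matrix `F`, `F_{jk} = ω^{jk}/√d`. -/
noncomputable def Fmat (d : ℕ) [NeZero d] : Matrix (ZMod d) (ZMod d) ℂ :=
  Matrix.of fun j k => omegaRoot d ^ (j.val * k.val) / (Real.sqrt d : ℂ)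

/-- The diagonal matrix `R`, `R_{jj} = μ^{j(j+d)}`. -/
noncomputable def Rmat (d : ℕ) [NeZero d] : Matrix (ZMod d) (ZMod d) ℂ :=
  Matrix.of fun j k => if j = k then muRoot d ^ (j.val * (j.val + d)) else 0

/-- The operator `L`, `Lc = (1/d) Σ_{j,k} c_{jk} S^{-j} Ω^{-k}`. -/
noncomputable def Lop (d : ℕ) [NeZero d] (c : Matrix (ZMod d) (ZMod d) ℂ) :
    Matrix (ZMod d) (ZMod d) ℂ :=
  (1 / (d : ℂ)) • ∑ j : ZMod d, ∑ k : ZMod d, c j k • ((Smat d ^ j.val)⁻¹ * (Omat d ^ k.val)⁻¹)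

/-! ### Auxiliary lemmas -/

set_option linter.unusedSectionVars false

section Char
variable (d : ℕ) [NeZero d]

lemma omega_pow_d : omegaRoot d ^ d = 1 := by
  have hd : (d : ℂ) ≠ 0 := Nat.cast_ne_zero.2 (NeZero.ne d)
  rw [omegaRoot, ← Complex.exp_nat_mul]
  rw [show (d : ℂ) * (2 * Real.pi * Complex.I / d) = 2 * Real.pi * Complex.I by
    field_simp]
  exact Complex.exp_two_pi_mul_I

lemma omega_ne_zero : omegaRoot d ≠ 0 := Complex.exp_ne_zero _

lemma omega_pow_eq_one_iff (m : ℕ) : omegaRoot d ^ m = 1 ↔ d ∣ m := by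
  have hd : (d : ℂ) ≠ 0 := Nat.cast_ne_zero.2 (NeZero.ne d)
  constructor
  · intro h
    rw [omegaRoot, ← Complex.exp_nat_mul, Complex.exp_eq_one_iff] at h
    obtain ⟨n, hn⟩ := h
    have hπ : (2 * (Real.pi:ℂ) * Complex.I) ≠ 0 := by
      simp [Real.pi_ne_zero, Complex.I_ne_zero]
    have h2 : (m : ℂ) = n * d := by
      have : (m : ℂ) * (2 * ↑Real.pi * I) = (n * d) * (2 * ↑Real.pi * I) := by
        field_simp at hn
        linear_combination (2 * ↑Real.pi * I) * hn
      exact mul_right_cancel₀ hπ this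
    have h3 : (m : ℤ) = n * d := by exact_mod_cast h2
    have : (d : ℤ) ∣ (m : ℤ) := ⟨n, by linarith⟩
    exact_mod_cast this
  · rintro ⟨k, rfl⟩
    rw [pow_mul, omega_pow_d, one_pow]

/-- The basic character `e x = ω^{x.val}`. -/
noncomputable def eC (x : ZMod d) : ℂ := omegaRoot d ^ x.val

lemma omega_pow_mod (n : ℕ) : omegaRoot d ^ (n % d) = omegaRoot d ^ n := by
  conv_rhs => rw [← Nat.div_add_mod n d]
  rw [pow_add, pow_mul, omega_pow_d, one_pow, one_mul]

lemma eC_natCast (m : ℕ) : eC d (m : ZMod d) = omegaRoot d ^ m := by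
  rw [eC, ZMod.val_natCast, omega_pow_mod]

lemma eC_zero : eC d 0 = 1 := by
  simpa using eC_natCast d 0

lemma eC_add (x y : ZMod d) : eC d (x + y) = eC d x * eC d y := by
  have : x + y = ((x.val + y.val : ℕ) : ZMod d) := by
    push_cast
    simp [ZMod.natCast_val, ZMod.cast_id]
  rw [this, eC_natCast, pow_add, eC, eC]

lemma eC_mul_neg (x : ZMod d) : eC d x * eC d (-x) = 1 := by
  rw [← eC_add]; simp [eC_zero]

lemma eC_ne_zero (x : ZMod d) : eC d x ≠ 0 := pow_ne_zero _ (omega_ne_zero d)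

lemma eC_eq_one_iff (x : ZMod d) : eC d x = 1 ↔ x = 0 := by
  rw [eC, omega_pow_eq_one_iff]
  constructor
  · intro h
    have := ZMod.val_lt x
    have : x.val = 0 := Nat.eq_zero_of_dvd_of_lt h this |>.symm ▸ rfl
    · exact (ZMod.val_eq_zero x).mp this
  · rintro rfl; simp

lemma eC_pow (x : ZMod d) (n : ℕ) : eC d x ^ n = eC d (x * n) := by
  have : x * (n : ZMod d) = ((x.val * n : ℕ) : ZMod d) := by
    push_cast; simp [ZMod.natCast_val, ZMod.cast_id]
  rw [this, eC_natCast, pow_mul, eC]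

/-- Orthogonality / delta sum. -/
lemma eC_sum_delta (t : ZMod d) :
    ∑ x : ZMod d, eC d (x * t) = if t = 0 then (d : ℂ) else 0 := by
  split_ifs with h
  · subst h; simp [eC_zero]
  · have h1 : eC d t ≠ 1 := fun hh => h ((eC_eq_one_iff d t).mp hh)
    have key : eC d t * ∑ x : ZMod d, eC d (x * t) = ∑ x : ZMod d, eC d (x * t) := by
      rw [Finset.mul_sum]
      refine Fintype.sum_equiv (Equiv.addRight 1) _ _ (fun x => ?_)
      simp only [Equiv.coe_addRight]
      rw [← eC_add]
      ring_nf
    have : (eC d t - 1) * ∑ x : ZMod d, eC d (x * t) = 0 := by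
      rw [sub_mul, one_mul, key, sub_self]
    rcases mul_eq_zero.mp this with h' | h'
    · exact absurd (sub_eq_zero.mp h') h1
    · exact h'

end Char

section Mat
variable (d : ℕ) [NeZero d]

lemma Smat_pow (m : ℕ) :
    Smat d ^ m = Matrix.of fun j k => if j = k + (m : ZMod d) then 1 else 0 := by
  induction m with
  | zero => ext j k; simp [Matrix.one_apply]
  | succ n ih =>
    ext j k
    rw [pow_succ, ih, Matrix.mul_apply]
    simp only [Matrix.of_apply, Smat]
    rw [Finset.sum_eq_single (k + 1)]
    · push_cast
      rw [show k + ((n:ZMod d) + 1) = k + 1 + (n:ZMod d) by ring]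
      simp
    · intro b _ hb
      simp [Matrix.of_apply, hb]
    · intro h; simp at h

lemma Smat_pow_inv (m : ℕ) :
    (Smat d ^ m)⁻¹ = Matrix.of fun j k => if k = j + (m : ZMod d) then 1 else 0 := by
  refine Matrix.inv_eq_left_inv ?_
  rw [Smat_pow]
  ext j k
  rw [Matrix.mul_apply]
  rw [Finset.sum_eq_single (j + (m : ZMod d))]
  · simp [Matrix.one_apply, add_left_inj]
  · intro b _ hb
    simp only [Matrix.of_apply]
    rw [if_neg hb, zero_mul]
  · intro h; simp at h

lemma Omat_eq : Omat d = Matrix.diagonal (fun j => eC d j) := by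
  ext j k
  by_cases h : j = k <;> simp [Omat, Matrix.diagonal, h, eC]

lemma Omat_pow (m : ℕ) :
    Omat d ^ m = Matrix.diagonal (fun j => eC d (j * m)) := by
  rw [Omat_eq, Matrix.diagonal_pow]
  ext j k
  by_cases h : j = k
  · subst h; simp [Matrix.diagonal_apply_eq, Pi.pow_apply, eC_pow]
  · simp [Matrix.diagonal_apply_ne _ h]

lemma Omat_pow_inv (m : ℕ) :
    (Omat d ^ m)⁻¹ = Matrix.diagonal (fun j => eC d (-(j * m))) := by
  refine Matrix.inv_eq_right_inv ?_
  rw [Omat_pow, Matrix.diagonal_mul_diagonal]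
  have h : (fun j : ZMod d => eC d (j * m) * eC d (-(j * m))) = fun _ => (1:ℂ) :=
    funext fun j => eC_mul_neg d _
  rw [h, Matrix.diagonal_one]

lemma ZMod.natCast_val_self (x : ZMod d) : ((x.val : ℕ) : ZMod d) = x := by
  simp [ZMod.natCast_val, ZMod.cast_id]

lemma Lop_apply (c : Matrix (ZMod d) (ZMod d) ℂ) (a b : ZMod d) :
    Lop d c a b = (1 / (d : ℂ)) * ∑ k : ZMod d, eC d (-(b * k)) * c (b - a) k := by
  rw [Lop]
  rw [Matrix.smul_apply, Matrix.sum_apply]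
  simp only [Matrix.sum_apply, Matrix.smul_apply]
  have hentry : ∀ j k : ZMod d,
      ((Smat d ^ j.val)⁻¹ * (Omat d ^ k.val)⁻¹) a b
        = (if b = a + j then 1 else 0) * eC d (-(b * k)) := by
    intro j k
    rw [Smat_pow_inv, Omat_pow_inv, Matrix.mul_diagonal]
    simp [ZMod.natCast_val_self]
  simp only [hentry, smul_eq_mul]
  congr 1
  rw [Finset.sum_comm]
  refine Finset.sum_congr rfl fun k _ => ?_
  rw [Finset.sum_eq_single (b - a)]
  · rw [if_pos (by ring), one_mul, mul_comm]
  · intro j _ hj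
    have hne : ¬ b = a + j := by
      intro h; apply hj; rw [h]; ring
    rw [if_neg hne, zero_mul, mul_zero]
  · intro h; simp at h

end Mat

section Main
variable (d : ℕ) [NeZero d]

lemma val_mul_natCast (j k : ZMod d) : j * k = ((j.val * k.val : ℕ) : ZMod d) := by
  push_cast
  simp [ZMod.natCast_val, ZMod.cast_id]

lemma eC_val_mul (j k : ZMod d) : omegaRoot d ^ (j.val * k.val) = eC d (j * k) := by
  rw [val_mul_natCast, eC_natCast]

lemma s_mul_s : ((Real.sqrt d : ℝ) : ℂ) * ((Real.sqrt d : ℝ) : ℂ) = (d : ℂ) := by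
  rw [← Complex.ofReal_mul, Real.mul_self_sqrt (Nat.cast_nonneg d)]
  norm_num

lemma s_ne_zero : ((Real.sqrt d : ℝ) : ℂ) ≠ 0 := by
  have hd : (0:ℝ) < d := by
    exact_mod_cast Nat.pos_of_ne_zero (NeZero.ne d)
  have : (0:ℝ) < Real.sqrt d := Real.sqrt_pos.mpr hd
  exact_mod_cast this.ne'

lemma d_ne_zero : (d : ℂ) ≠ 0 := Nat.cast_ne_zero.2 (NeZero.ne d)

lemma M_apply (c : Matrix (ZMod d) (ZMod d) ℂ) (a b : ZMod d) :
    (((Real.sqrt d : ℝ) : ℂ) • Lop d c) a b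
      = (((Real.sqrt d : ℝ) : ℂ))⁻¹ * ∑ k : ZMod d, eC d (-(b * k)) * c (b - a) k := by
  rw [Matrix.smul_apply, Lop_apply, smul_eq_mul, ← mul_assoc]
  congr 1
  rw [← s_mul_s d]
  field_simp

lemma M2_apply (c : Matrix (ZMod d) (ZMod d) ℂ) (a b : ZMod d) :
    (((Real.sqrt d : ℝ) : ℂ) • Lop d (((Real.sqrt d : ℝ) : ℂ) • Lop d c)) a b
      = (1 / (d : ℂ)) * ∑ p : ZMod d, ∑ l : ZMod d,
          eC d (-((p + b - a) * (b + l))) * c p l := by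
  set s := ((Real.sqrt d : ℝ) : ℂ) with hs
  rw [M_apply]
  have h1 : ∀ k : ZMod d,
      eC d (-(b * k)) * (s • Lop d c) (b - a) k
        = s⁻¹ * ∑ l : ZMod d, eC d (-(b * k) + -(k * l)) * c (k - (b - a)) l := by
    intro k
    rw [M_apply, ← mul_assoc, mul_comm (eC d (-(b*k))) s⁻¹, mul_assoc]
    congr 1
    rw [Finset.mul_sum]
    refine Finset.sum_congr rfl fun l _ => ?_
    rw [eC_add, ← mul_assoc]
  simp only [h1]
  rw [← Finset.mul_sum, ← mul_assoc]
  have hss : s⁻¹ * s⁻¹ = 1 / (d : ℂ) := by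
    rw [← s_mul_s d]
    field_simp
    rw [hs]
  rw [hss]
  congr 1
  refine Fintype.sum_equiv (Equiv.subRight (b - a)) _ _ (fun k => ?_)
  simp only [Equiv.subRight_apply]
  refine Finset.sum_congr rfl fun l _ => ?_
  congr 2
  ring

lemma M4_apply (c : Matrix (ZMod d) (ZMod d) ℂ) (a b : ZMod d) :
    (((Real.sqrt d : ℝ) : ℂ) • Lop d (((Real.sqrt d : ℝ) : ℂ) • Lop d
      (((Real.sqrt d : ℝ) : ℂ) • Lop d (((Real.sqrt d : ℝ) : ℂ) • Lop d c)))) a b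
      = ∑ q : ZMod d, ((1 / (d : ℂ)) * ∑ j : ZMod d,
          eC d (-(j * a) + -(j * j) + j * q)) * c q b := by
  have hdd : (d : ℂ) * (1 / (d:ℂ)) = 1 := by
    field_simp
    exact div_self (d_ne_zero d)
  rw [M2_apply]
  have h1 : ∀ p l : ZMod d,
      (((Real.sqrt d : ℝ) : ℂ) • Lop d (((Real.sqrt d : ℝ) : ℂ) • Lop d c)) p l
        = (1 / (d : ℂ)) * ∑ q : ZMod d, ∑ m : ZMod d,
            eC d (-((q + l - p) * (l + m))) * c q m := fun p l => M2_apply d c p l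
  simp only [h1]
  calc
    (1 / (d : ℂ)) * ∑ p : ZMod d, ∑ l : ZMod d,
        eC d (-((p + b - a) * (b + l))) * ((1 / (d : ℂ)) * ∑ q : ZMod d, ∑ m : ZMod d,
          eC d (-((q + l - p) * (l + m))) * c q m)
      = ∑ p : ZMod d, ∑ l : ZMod d, ∑ q : ZMod d, ∑ m : ZMod d,
          eC d (p * (m - b)) * (eC d (-((b - a) * (b + l)) + -((q + l) * (l + m)))
            * ((1 / (d:ℂ)) * ((1 / (d:ℂ)) * c q m))) := by
        simp only [Finset.mul_sum]
        refine Finset.sum_congr rfl fun p _ => Finset.sum_congr rfl fun l _ =>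
          Finset.sum_congr rfl fun q _ => Finset.sum_congr rfl fun m _ => ?_
        have h12 : eC d (-((p + b - a) * (b + l))) * eC d (-((q + l - p) * (l + m)))
            = eC d (p * (m - b)) * eC d (-((b - a) * (b + l)) + -((q + l) * (l + m))) := by
          rw [← eC_add, ← eC_add]
          congr 1
          ring
        linear_combination ((1/(d:ℂ)) * (1/(d:ℂ)) * c q m) * h12
    _ = ∑ l : ZMod d, ∑ q : ZMod d, ∑ m : ZMod d, ∑ p : ZMod d,
          eC d (p * (m - b)) * (eC d (-((b - a) * (b + l)) + -((q + l) * (l + m)))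
            * ((1 / (d:ℂ)) * ((1 / (d:ℂ)) * c q m))) := by
        rw [Finset.sum_comm]
        refine Finset.sum_congr rfl fun l _ => ?_
        rw [Finset.sum_comm]
        refine Finset.sum_congr rfl fun q _ => ?_
        rw [Finset.sum_comm]
    _ = ∑ l : ZMod d, ∑ q : ZMod d, ∑ m : ZMod d,
          (if m = b then (d:ℂ) else 0) * (eC d (-((b - a) * (b + l)) + -((q + l) * (l + m)))
            * ((1 / (d:ℂ)) * ((1 / (d:ℂ)) * c q m))) := by
        refine Finset.sum_congr rfl fun l _ => Finset.sum_congr rfl fun q _ =>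
          Finset.sum_congr rfl fun m _ => ?_
        rw [← Finset.sum_mul, eC_sum_delta]
        simp only [sub_eq_zero]
    _ = ∑ l : ZMod d, ∑ q : ZMod d,
          (d:ℂ) * (eC d (-((b - a) * (b + l)) + -((q + l) * (l + b)))
            * ((1 / (d:ℂ)) * ((1 / (d:ℂ)) * c q b))) := by
        refine Finset.sum_congr rfl fun l _ => Finset.sum_congr rfl fun q _ => ?_
        simp only [ite_mul, zero_mul, Finset.sum_ite_eq', Finset.mem_univ, if_true]
    _ = ∑ q : ZMod d, ∑ j : ZMod d,
          ((1 / (d : ℂ)) * eC d (-(j * a) + -(j * j) + j * q)) * c q b := by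
        rw [Finset.sum_comm]
        refine Finset.sum_congr rfl fun q _ => ?_
        have hinv : Function.Involutive (fun j : ZMod d => -(j + b)) := fun j => by ring
        refine Fintype.sum_equiv (Function.Involutive.toPerm _ hinv) _ _ (fun l => ?_)
        have hperm : ((Function.Involutive.toPerm _ hinv) l : ZMod d) = -(l + b) := rfl
        rw [hperm]
        have hexp : eC d (-((b - a) * (b + l)) + -((q + l) * (l + b)))
            = eC d (-(-(l + b) * a) + -(-(l + b) * -(l + b)) + -(l + b) * q) := by
          congr 1
          ring
        rw [hexp]
        linear_combination (eC d (-(-(l + b) * a) + -(-(l + b) * -(l + b)) + -(l + b) * q)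
          * (1/(d:ℂ)) * c q b) * hdd
    _ = ∑ q : ZMod d, ((1 / (d : ℂ)) * ∑ j : ZMod d,
          eC d (-(j * a) + -(j * j) + j * q)) * c q b := by
        refine Finset.sum_congr rfl fun q _ => ?_
        rw [Finset.mul_sum, Finset.sum_mul]

lemma eC_neg_eq_inv (x : ZMod d) : eC d (-x) = (eC d x)⁻¹ :=
  eq_inv_of_mul_eq_one_left (by rw [mul_comm]; exact eC_mul_neg d x)

lemma abs_omega : ‖omegaRoot d‖ = 1 := by
  rw [omegaRoot, show (2 * (Real.pi:ℂ) * Complex.I / d) = ((2 * Real.pi / d : ℝ) : ℂ) * Complex.I by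
    push_cast; ring]
  exact Complex.norm_exp_ofReal_mul_I _

lemma eC_conj (x : ZMod d) : (starRingEnd ℂ) (eC d x) = eC d (-x) := by
  have habs : ‖eC d x‖ = 1 := by
    rw [eC, norm_pow, abs_omega, one_pow]
  rw [eC_neg_eq_inv, Complex.inv_def, Complex.normSq_eq_norm_sq, habs]
  simp

lemma mu_sq : muRoot d ^ 2 = omegaRoot d := by
  have hd : (d : ℂ) ≠ 0 := d_ne_zero d
  rw [muRoot, ← Complex.exp_nat_mul, omegaRoot]
  congr 1
  push_cast
  field_simp

lemma Rmat_sq : Rmat d ^ 2 = Matrix.diagonal (fun j => eC d (j * j)) := by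
  have h : Rmat d = Matrix.diagonal (fun j : ZMod d => muRoot d ^ (j.val * (j.val + d))) := by
    ext j k
    by_cases hjk : j = k <;> simp [Rmat, Matrix.diagonal, hjk]
  rw [h, Matrix.diagonal_pow]
  ext j k
  by_cases hjk : j = k
  · subst hjk
    simp only [Matrix.diagonal_apply_eq, Pi.pow_apply]
    rw [← pow_mul, mul_comm (j.val * (j.val + d)) 2, pow_mul, mu_sq,
      Nat.mul_add, pow_add, eC_val_mul,
      show j.val * d = d * j.val from mul_comm _ _, pow_mul, omega_pow_d, one_pow, mul_one]
  · simp [Matrix.diagonal_apply_ne _ hjk]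

lemma Rmat_sq_inv : (Rmat d ^ 2)⁻¹ = Matrix.diagonal (fun j => eC d (-(j * j))) := by
  refine Matrix.inv_eq_right_inv ?_
  rw [Rmat_sq, Matrix.diagonal_mul_diagonal]
  have h : (fun j : ZMod d => eC d (j * j) * eC d (-(j * j))) = fun _ => (1:ℂ) :=
    funext fun j => eC_mul_neg d _
  rw [h, Matrix.diagonal_one]

lemma RHS_apply (c : Matrix (ZMod d) (ZMod d) ℂ) (a b : ZMod d) :
    ((Fmat d)ᴴ * (Rmat d ^ 2)⁻¹ * Fmat d * c) a b
      = ∑ q : ZMod d, ((1 / (d : ℂ)) * ∑ j : ZMod d,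
          eC d (-(j * a) + -(j * j) + j * q)) * c q b := by
  rw [Matrix.mul_apply]
  refine Finset.sum_congr rfl fun q _ => ?_
  congr 1
  rw [Rmat_sq_inv, Matrix.mul_apply]
  have hentry : ∀ j : ZMod d,
      ((Fmat d)ᴴ * Matrix.diagonal (fun j => eC d (-(j * j)))) a j * Fmat d j q
        = (1 / (d : ℂ)) * eC d (-(j * a) + -(j * j) + j * q) := by
    intro j
    rw [Matrix.mul_diagonal, Matrix.conjTranspose_apply]
    simp only [Fmat, Matrix.of_apply]
    rw [eC_val_mul, eC_val_mul]
    rw [star_div₀, Complex.star_def, eC_conj, Complex.conj_ofReal]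
    rw [eC_add, eC_add, ← s_mul_s d]
    have hs := s_ne_zero d
    field_simp
  simp only [hentry]
  rw [← Finset.mul_sum]

end Main

theorem stmt10 (d : ℕ) [NeZero d] (hd : 2 ≤ d) (c : Matrix (ZMod d) (ZMod d) ℂ) :
    (fun a => ((Real.sqrt d : ℝ) : ℂ) • Lop d a)^[4] c
      = (Fmat d)ᴴ * (Rmat d ^ 2)⁻¹ * Fmat d * c := by
  have h4 : (fun a => ((Real.sqrt d : ℝ) : ℂ) • Lop d a)^[4] c
      = ((Real.sqrt d : ℝ) : ℂ) • Lop d (((Real.sqrt d : ℝ) : ℂ) • Lop d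
        (((Real.sqrt d : ℝ) : ℂ) • Lop d (((Real.sqrt d : ℝ) : ℂ) • Lop d c))) := rfl
  rw [h4]
  ext a b
  rw [M4_apply, RHS_apply]
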